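/- Fix μ > μ0 in M, c > 1, δ ∈ (0,1]. Assume there exists a unique x* ∈ M solving D_{ψ*_{μ0}}(x*, μ0) = D_{ψ*_μ}(x*, μ), and set D*_μ := D_{ψ*_{μ0}}(x*, μ0). Define T_high(δ) := inf{ t ≥ 1 : c·[log(1/δ) + 2·log(log_c(c·t))] / D*_μ ≤ t }. Then T_high(δ) ≤ max(1, A), where A := (2c/D*_μ)·log(1/δ) + (2c/D*_μ)·log( 2·log_c( 2c²/log c ) + 2·max( log_c(1/D*_μ), 0 ) ). -/

import Mathlib

open MeasureTheory ProbabilityTheory Real Set Filter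
open scoped Classical ENNReal

noncomputable section

/-- A sub-`ψ_M` family of distributions: `M ⊆ ℝ` open convex; for each `μ ∈ M`, `ψ μ` is
finite and strictly convex on the common closed set `Λ` whose interior contains `0`,
differentiable on the interior of `Λ`, with `ψ μ 0 = 0` and `(ψ μ)' 0 = μ`; `ψs μ` is the
convex conjugate of `ψ μ`, finite and differentiable on `M` with derivative `ψs' μ`. -/
structure SubPsiFamily where
  M : Set ℝ
  Λ : Set ℝ
  ψ : ℝ → ℝ → ℝ
  ψs : ℝ → ℝ → ℝ
  ψs' : ℝ → ℝ → ℝ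
  M_open : IsOpen M
  M_convex : Convex ℝ M
  Λ_closed : IsClosed Λ
  zero_mem : (0 : ℝ) ∈ interior Λ
  ψ_strictConvexOn : ∀ μ ∈ M, StrictConvexOn ℝ Λ (ψ μ)
  ψ_diff : ∀ μ ∈ M, ∀ l ∈ interior Λ, DifferentiableAt ℝ (ψ μ) l
  ψ_zero : ∀ μ ∈ M, ψ μ 0 = 0
  ψ_deriv_zero : ∀ μ ∈ M, HasDerivAt (ψ μ) μ 0
  conj : ∀ μ ∈ M, ∀ x ∈ M, IsLUB ((fun l => l * x - ψ μ l) '' Λ) (ψs μ x)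
  ψs_deriv : ∀ μ ∈ M, ∀ x ∈ M, HasDerivAt (ψs μ) (ψs' μ x) x

namespace SubPsiFamily

variable (F : SubPsiFamily)

/-- Bregman divergence `D_{ψ*_μ}(z₁, z₂)`. -/
def D (μ z1 z2 : ℝ) : ℝ := F.ψs μ z1 - F.ψs μ z2 - F.ψs' μ z2 * (z1 - z2)

/-- The family has an order-preserving class of Bregman divergences. -/
def OrderPreserving : Prop :=
  ∀ z0 ∈ F.M, ∀ μ0 ∈ F.M, ∀ μ1 ∈ F.M,
    ((μ1 ≤ μ0 ∧ μ0 ≤ z0) ∨ (z0 ≤ μ0 ∧ μ0 ≤ μ1)) → F.D μ0 μ1 μ0 ≤ F.D z0 μ1 z0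

/-- LR-like statistic `L_n(μ₁, μ₀)` as a function of the sample mean `x̄`. -/
def LR (n : ℕ) (xbar μ1 μ0 : ℝ) : ℝ :=
  Real.exp (n * (F.ψs' μ0 μ1 * xbar - F.ψ μ0 (F.ψs' μ0 μ1)))

/-- `log GL_n(μ₁, μ₀) = log (max (sup_{z > μ1} L_n(z, μ0)) 1)`, as an extended real. -/
def logGL (n : ℕ) (xbar μ1 μ0 : ℝ) : EReal :=
  max (⨆ z : {z : ℝ // z ∈ F.M ∧ μ1 < z}, (Real.log (F.LR n xbar z μ0) : EReal)) 0

/-- A random variable `Y` has a sub-`ψ_μ` distribution under `P`. -/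
def SubPsi {Ω : Type*} [MeasurableSpace Ω] (P : Measure Ω) (μ : ℝ) (Y : Ω → ℝ) : Prop :=
  Measurable Y ∧ (∀ᵐ ω ∂P, Y ω ∈ closure F.M) ∧ (∫ ω, Y ω ∂P) = μ ∧
    ∀ l ∈ F.Λ, Real.log (∫ ω, Real.exp (l * Y ω) ∂P) ≤ F.ψ μ l

/-- A distribution `Q` on `ℝ` is sub-`ψ_μ`. -/
def SubPsiDist (Q : Measure ℝ) (μ : ℝ) : Prop :=
  (∀ᵐ x ∂Q, x ∈ closure F.M) ∧ (∫ x, x ∂Q) = μ ∧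
    ∀ l ∈ F.Λ, Real.log (∫ x, Real.exp (l * x) ∂Q) ≤ F.ψ μ l

end SubPsiFamily

/-- Sample mean `X̄_n` of the first `n` observations. -/
def sampleMean {Ω : Type*} (X : ℕ → Ω → ℝ) (n : ℕ) (ω : Ω) : ℝ :=
  (∑ i ∈ Finset.range n, X i ω) / n


/-- `T_high(δ) := inf{ t ≥ 1 : c·[log(1/δ) + 2·log(log_c(c·t))] / D ≤ t }`. -/
def Thigh (c δ D : ℝ) : ℝ :=
  sInf {t : ℝ | 1 ≤ t ∧ c * (Real.log (1 / δ) + 2 * Real.log (Real.logb c (c * t))) / D ≤ t}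

private lemma log_tangent {x k : ℝ} (hx : 0 < x) (hk : 0 < k) :
    Real.log x ≤ x / k + Real.log k - 1 := by
  have h1 : Real.log (x / k) ≤ x / k - 1 := Real.log_le_sub_one_of_pos (div_pos hx hk)
  have h2 : Real.log (x / k) = Real.log x - Real.log k := Real.log_div hx.ne' hk.ne'
  linarith only [h1, h2]

set_option maxHeartbeats 1000000 in
/-- **Explicit upper bound on `T_high(δ)` (second claim of Theorem 3).** -/
theorem Thigh_le
    (F : SubPsiFamily)
    (μ0 μ : ℝ) (hμ0 : μ0 ∈ F.M) (hμM : μ ∈ F.M) (h0 : μ0 < μ)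
    (c δ : ℝ) (hc : 1 < c) (hδ : δ ∈ Set.Ioc (0 : ℝ) 1)
    (xstar : ℝ) (hxstar : xstar ∈ F.M) (hxeq : F.D μ0 xstar μ0 = F.D μ xstar μ)
    (huniq : ∀ y ∈ F.M, F.D μ0 y μ0 = F.D μ y μ → y = xstar) :
    Thigh c δ (F.D μ0 xstar μ0) ≤
      max 1
        (2 * c / F.D μ0 xstar μ0 * Real.log (1 / δ) +
          2 * c / F.D μ0 xstar μ0 *
            Real.log (2 * Real.logb c (2 * c ^ 2 / Real.log c) +
              2 * max (Real.logb c (1 / F.D μ0 xstar μ0)) 0)) := by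
  obtain ⟨hδ0, hδ1⟩ := hδ
  unfold Thigh
  have hc0 : (0:ℝ) < c := lt_trans one_pos hc
  set d := F.D μ0 xstar μ0 with hd
  have hε : 0 < Real.log c := Real.log_pos hc
  set ε := Real.log c with hεdef
  have hL : 0 ≤ Real.log (1/δ) := Real.log_nonneg (by rw [le_div_iff₀ hδ0]; linarith only [hδ1])
  set L := Real.log (1/δ) with hLdef
  set Q := max (Real.logb c (1/d)) 0 with hQdef
  set P := Real.logb c (2*c^2/ε) with hPdef
  set B := 2*P + 2*Q with hBdef
  set A := 2*c/d*L + 2*c/d*Real.log B with hAdef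
  set S : Set ℝ :=
    {t : ℝ | 1 ≤ t ∧ c * (L + 2 * Real.log (Real.logb c (c * t))) / d ≤ t} with hSdef
  clear_value d ε L Q P B A
  have hbdd : BddBelow S := ⟨1, fun t ht => ht.1⟩
  have hlog2_pos : 0 < Real.log 2 := Real.log_pos one_lt_two
  have hlog2_le : Real.log 2 ≤ 1 := by
    have h := Real.log_le_sub_one_of_pos (show (0:ℝ) < 2 by norm_num)
    linarith only [h]
  have hεc : ε < c := by
    have h := Real.log_le_sub_one_of_pos hc0
    rw [← hεdef] at h; linarith only [h, hc0]
  have hQ0 : 0 ≤ Q := by rw [hQdef]; exact le_max_right _ _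
  have harg : c ≤ 2*c^2/ε := by
    rw [le_div_iff₀ hε]
    have h1 : c*ε ≤ c*c := mul_le_mul_of_nonneg_left hεc.le hc0.le
    nlinarith [h1, sq_nonneg c]
  have hargpos : 0 < 2*c^2/ε := by positivity
  have hP1 : 1 ≤ P := by
    have h1 : ε ≤ Real.log (2*c^2/ε) := by
      nth_rewrite 1 [hεdef]
      exact Real.log_le_log hc0 harg
    rw [hPdef, Real.logb, ← hεdef, le_div_iff₀ hε]
    linarith only [h1]
  have hB2 : 2 ≤ B := by rw [hBdef]; linarith only [hP1, hQ0]
  have hB0 : 0 < B := by linarith only [hB2]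
  have hlogB2 : Real.log 2 ≤ Real.log B := Real.log_le_log (by norm_num) hB2
  have hlogB0 : 0 ≤ Real.log B := le_trans hlog2_pos.le hlogB2
  have hone : c * L / d ≤ 1 → (1:ℝ) ∈ S := by
    intro h
    refine ⟨le_refl 1, ?_⟩
    rw [mul_one, Real.logb_self_eq_one hc, Real.log_one, mul_zero, add_zero]
    exact h
  rcases le_or_gt d 0 with hdle | hd0
  · have h1 : (1:ℝ) ∈ S := by
      apply hone
      have h2 : c * L / d ≤ 0 :=
        div_nonpos_of_nonneg_of_nonpos (mul_nonneg hc0.le hL) hdle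
      linarith only [h2]
    exact le_trans (csInf_le hbdd h1) (le_max_left _ _)
  · rcases le_or_gt A 1 with hA1 | hA1
    · have h1 : (1:ℝ) ∈ S := by
        apply hone
        have h2 : 0 ≤ 2*c/d*Real.log B := by positivity
        have h3 : 2*c/d*L + 2*c/d*Real.log B ≤ 1 := by rw [← hAdef]; exact hA1
        have h4 : c * L / d = (2*c/d*L)/2 := by field_simp
        rw [h4]; linarith only [h2, h3]
      exact le_trans (csInf_le hbdd h1) (le_max_left _ _)
    · -- main case: A ∈ S
      have hexpL : L/2 + 1 ≤ Real.exp (L/2) := Real.add_one_le_exp _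
      have he1 : (1:ℝ) ≤ Real.exp (L/2) := Real.one_le_exp (by linarith only [hL])
      have hLBpos : 0 < L + Real.log B := by linarith only [hL, hlogB2, hlog2_pos]
      have hA0 : 0 < A := lt_trans one_pos hA1
      have hcA1 : 1 < c * A := by
        have h1 : c*1 ≤ c*A := mul_le_mul_of_nonneg_left hA1.le hc0.le
        linarith only [h1, hc]
      have hexpand : c * A = (2*c^2/ε) * ε * (1/d) * (L + Real.log B) := by
        rw [hAdef]; field_simp
      have hlog_split : Real.log (c*A) =
          Real.log (2*c^2/ε) + Real.log ε + Real.log (1/d)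
            + Real.log (L + Real.log B) := by
        rw [hexpand, Real.log_mul (by positivity) hLBpos.ne',
          Real.log_mul (by positivity) (by positivity : (0:ℝ) < 1/d).ne',
          Real.log_mul hargpos.ne' hε.ne']
      have hεP : Real.log (2*c^2/ε) = ε * P := by
        rw [hPdef, Real.logb, ← hεdef]; field_simp
      have hlogε : Real.log ε ≤ ε/2 := by
        have h := log_tangent hε (show (0:ℝ) < 2 by norm_num)
        linarith only [h, hlog2_le]
      have hlog1d : Real.log (1/d) ≤ ε * Q := by
        have h1 : Real.log (1/d) = ε * Real.logb c (1/d) := by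
          rw [Real.logb, ← hεdef]; field_simp
        have h2 : Real.logb c (1/d) ≤ Q := by rw [hQdef]; exact le_max_left _ _
        rw [h1]; exact mul_le_mul_of_nonneg_left h2 hε.le
      have ht4 : Real.log (L + Real.log B) ≤ L/2 + Real.log (2 + Real.log B) := by
        have hsum : L + Real.log B ≤ Real.exp (L/2) * (2 + Real.log B) := by
          have ha : Real.log B ≤ Real.exp (L/2) * Real.log B :=
            le_mul_of_one_le_left hlogB0 he1
          have hb : Real.exp (L/2) * (2 + Real.log B)
              = 2*Real.exp (L/2) + Real.exp (L/2) * Real.log B := by ring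
          linarith only [ha, hb, hexpL]
        have h5 := Real.log_le_log hLBpos hsum
        rw [Real.log_mul (Real.exp_ne_zero _)
          (show (2:ℝ) + Real.log B ≠ 0 by linarith only [hlogB0]), Real.log_exp] at h5
        linarith only [h5]
      have hlog4 : Real.log 4 = 2 * Real.log 2 := by
        rw [show (4:ℝ) = 2^2 by norm_num, Real.log_pow]; push_cast; ring
      have hsplit2 : Real.log (2*c^2/ε) = Real.log 2 + 2*ε - Real.log ε := by
        rw [Real.log_div (by positivity) hε.ne',
          Real.log_mul (by norm_num) (by positivity), Real.log_pow, ← hεdef]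
        push_cast; ring
      have hu_lb : 2*Real.log 2 + 4*ε - 2*Real.log ε ≤ ε*B := by
        have h1 : ε*B = 2*(ε*P) + 2*(ε*Q) := by rw [hBdef]; ring
        have h2 : 0 ≤ ε*Q := mul_nonneg hε.le hQ0
        linarith only [h1, h2, hsplit2, hεP]
      have hu2 : 2 + 4*Real.log 2 ≤ ε*B := by
        have h1 : Real.log (2*ε) ≤ 2*ε - 1 := Real.log_le_sub_one_of_pos (by linarith only [hε])
        have h2 : Real.log (2*ε) = Real.log 2 + Real.log ε :=
          Real.log_mul (by norm_num) hε.ne'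
        linarith only [h1, h2, hu_lb]
      have hu_pos : 0 < ε*B := by linarith only [hu2, hlog2_pos]
      have hlogu : Real.log (ε*B) ≤ (ε*B)/4 + 2*Real.log 2 - 1 := by
        have h := log_tangent hu_pos (show (0:ℝ) < 4 by norm_num)
        linarith only [h, hlog4]
      have hlogB_eq : Real.log B = Real.log (ε*B) - Real.log ε := by
        rw [Real.log_mul hε.ne' hB0.ne']; ring
      have h2logB : 2 + Real.log B ≤ 1 + Real.log 2 + 3*(ε*B)/4 - 2*ε := by
        linarith only [hlogu, hu_lb, hlogB_eq]
      have hfin : Real.log (2 + Real.log B) ≤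
          (1 + Real.log 2 + 3*(ε*B)/4 - 2*ε)/4 + 2*Real.log 2 - 1 := by
        have h := log_tangent (show 0 < 2 + Real.log B by linarith only [hlogB0])
          (show (0:ℝ) < 4 by norm_num)
        linarith only [h, hlog4, h2logB]
      have harith : (ε*B)/2 + ε/2 + Real.log (2 + Real.log B) ≤ ε*B := by
        linarith only [hfin, hu2, hlog2_le]
      have hRHS : ε*B + L/2 ≤ ε * (Real.exp (L/2) * B) := by
        have h1 : ε*((1+L/2)*B) ≤ ε*(Real.exp (L/2)*B) := by
          apply mul_le_mul_of_nonneg_left _ hε.le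
          apply mul_le_mul_of_nonneg_right _ hB0.le
          linarith only [hexpL]
        have h2 : L/2 * 1 ≤ L/2 * (ε*B) :=
          mul_le_mul_of_nonneg_left (by linarith only [hu2, hlog2_pos]) (by linarith only [hL])
        have h3 : ε*((1+L/2)*B) = ε*B + L/2*(ε*B) := by ring
        linarith only [h1, h2, h3]
      have key : Real.log (c*A) ≤ ε * (Real.exp (L/2) * B) := by
        have hPQ : ε*P + ε*Q = ε*B/2 := by rw [hBdef]; ring
        rw [hlog_split, hεP]
        linarith only [hlogε, hlog1d, ht4, harith, hRHS, hPQ]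
      have hlogcA_pos : 0 < Real.log (c*A) := Real.log_pos hcA1
      have hlogb_pos : 0 < Real.logb c (c*A) := by
        rw [Real.logb, ← hεdef]; exact div_pos hlogcA_pos hε
      have h2 : Real.logb c (c*A) ≤ Real.exp (L/2) * B := by
        rw [Real.logb, ← hεdef, div_le_iff₀ hε]
        linarith only [key]
      have h3 : Real.log (Real.logb c (c*A)) ≤ L/2 + Real.log B := by
        have h5 := Real.log_le_log hlogb_pos h2
        rw [Real.log_mul (Real.exp_ne_zero _) hB0.ne', Real.log_exp] at h5
        linarith only [h5]
      have hmem : A ∈ S := by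
        refine ⟨hA1.le, ?_⟩
        have h6 : c * (L + 2 * Real.log (Real.logb c (c * A))) ≤
            c * (L + 2 * (L/2 + Real.log B)) := by
          apply mul_le_mul_of_nonneg_left _ hc0.le
          linarith only [h3]
        have h7 : c * (L + 2 * (L/2 + Real.log B)) / d = A := by
          rw [hAdef]; field_simp; ring
        calc c * (L + 2 * Real.log (Real.logb c (c * A))) / d
            ≤ c * (L + 2 * (L/2 + Real.log B)) / d :=
              (div_le_div_iff_of_pos_right hd0).mpr h6
          _ = A := h7
      exact le_trans (csInf_le hbdd hmem) (le_max_right _ _)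

end
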